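/- Abstract fixed point lemma with quadratic perturbation. Let X be a Banach space, 0 ≤ ε < 1, c > 0. Let T : X → X be linear with ‖Tx‖ ≤ ε‖x‖ for all x ∈ X, and let B : X × X → X be bilinear with ‖B(x₁,x₂)‖ ≤ c‖x₁‖‖x₂‖ for all x₁,x₂ ∈ X. Let y ∈ X with ‖y‖ < (1−ε)²/(4c), and let ξ₁ = ((1−ε) − √((1−ε)² − 4c‖y‖))/(2c) and ξ₂ = ((1−ε) + √((1−ε)² − 4c‖y‖))/(2c) be the two roots of ξ = ‖y‖ + εξ + cξ². Then the equation x + Tx + B(x,x) = y has a solution x̄ ∈ X with ‖x̄‖ ≤ ξ₁, and x̄ is the unique solution in the open ball {x ∈ X : ‖x‖ < ξ₂}. -/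

import Mathlib

noncomputable section

theorem fixed_point_with_quadratic_perturbation
    {X : Type*} [NormedAddCommGroup X] [NormedSpace ℝ X] [CompleteSpace X]
    (ε c : ℝ) (hε0 : 0 ≤ ε) (hε1 : ε < 1) (hc : 0 < c)
    (T : X →ₗ[ℝ] X) (hT : ∀ x : X, ‖T x‖ ≤ ε * ‖x‖)
    (B : X →ₗ[ℝ] X →ₗ[ℝ] X) (hB : ∀ x₁ x₂ : X, ‖B x₁ x₂‖ ≤ c * ‖x₁‖ * ‖x₂‖)
    (y : X) (hy : ‖y‖ < (1 - ε) ^ 2 / (4 * c)) :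
    ∃ x : X, ‖x‖ ≤ ((1 - ε) - Real.sqrt ((1 - ε) ^ 2 - 4 * c * ‖y‖)) / (2 * c) ∧
      x + T x + B x x = y ∧
      ∀ x' : X, ‖x'‖ < ((1 - ε) + Real.sqrt ((1 - ε) ^ 2 - 4 * c * ‖y‖)) / (2 * c) →
        x' + T x' + B x' x' = y → x' = x := by
  have hD : 0 < (1 - ε) ^ 2 - 4 * c * ‖y‖ := by
    rw [lt_div_iff₀ (by positivity)] at hy
    nlinarith
  set s : ℝ := Real.sqrt ((1 - ε) ^ 2 - 4 * c * ‖y‖) with hsdef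
  have hs2 : s ^ 2 = (1 - ε) ^ 2 - 4 * c * ‖y‖ := Real.sq_sqrt hD.le
  have hs0 : 0 < s := Real.sqrt_pos.mpr hD
  have hsle : s ≤ 1 - ε := by
    nlinarith [norm_nonneg y, hc.le]
  set ξ : ℝ := ((1 - ε) - s) / (2 * c) with hξdef
  have hξ0 : 0 ≤ ξ := div_nonneg (by linarith) (by linarith)
  have h2cξ : 2 * c * ξ = (1 - ε) - s := by
    rw [hξdef]; field_simp
  have hroot : ‖y‖ + ε * ξ + c * ξ ^ 2 = ξ := by
    rw [hξdef]; field_simp; linear_combination hs2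
  set S : Set X := Metric.closedBall 0 ξ with hSdef
  have hmem : ∀ x : X, x ∈ S → ‖x‖ ≤ ξ := by
    intro x hx
    rw [hSdef, Metric.mem_closedBall, dist_zero_right] at hx
    exact hx
  have hmap : ∀ x : X, x ∈ S → y - T x - B x x ∈ S := by
    intro x hx
    have hx' := hmem x hx
    have hxn := norm_nonneg x
    rw [hSdef, Metric.mem_closedBall, dist_zero_right]
    calc ‖y - T x - B x x‖ ≤ ‖y - T x‖ + ‖B x x‖ := norm_sub_le _ _
      _ ≤ (‖y‖ + ‖T x‖) + ‖B x x‖ := by gcongr; exact norm_sub_le _ _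
      _ ≤ (‖y‖ + ε * ‖x‖) + c * ‖x‖ * ‖x‖ := by gcongr; exact hT x; exact hB x x
      _ ≤ ‖y‖ + ε * ξ + c * ξ ^ 2 := by
          nlinarith [mul_le_mul_of_nonneg_left hx' hε0,
            mul_le_mul_of_nonneg_left (mul_le_mul hx' hx' hxn hξ0) hc.le]
      _ = ξ := hroot
  haveI : CompleteSpace S := IsClosed.completeSpace_coe (hs := Metric.isClosed_closedBall)
  haveI : Nonempty S := ⟨⟨0, Metric.mem_closedBall_self hξ0⟩⟩
  set f : S → S := fun p => ⟨y - T p - B p p, hmap p p.2⟩ with hfdef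
  -- key algebraic identity for differences
  have hkey : ∀ a b : X, (y - T a - B a a) - (y - T b - B b b)
      = T (b - a) + B b (b - a) + B (b - a) a := by
    intro a b
    simp only [map_sub, LinearMap.sub_apply]
    abel
  set K : NNReal := ⟨1 - s, by linarith⟩ with hKdef
  have hKcoe : (K : ℝ) = 1 - s := rfl
  have hlip : LipschitzWith K f := by
    apply LipschitzWith.of_dist_le_mul
    intro p q
    have hp := hmem p p.2
    have hq := hmem q q.2
    simp only [Subtype.dist_eq, dist_eq_norm]
    show ‖(y - T p - B p p) - (y - T q - B q q)‖ ≤ (K : ℝ) * ‖(p : X) - q‖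
    rw [hkey, hKcoe]
    have h1 : ‖T ((q : X) - p) + B q ((q : X) - p) + B ((q : X) - p) p‖
        ≤ ε * ‖(q : X) - p‖ + c * ‖(q : X)‖ * ‖(q : X) - p‖ + c * ‖(q : X) - p‖ * ‖(p : X)‖ := by
      calc ‖T ((q : X) - p) + B q ((q : X) - p) + B ((q : X) - p) p‖
          ≤ ‖T ((q : X) - p) + B q ((q : X) - p)‖ + ‖B ((q : X) - p) p‖ := norm_add_le _ _
        _ ≤ (‖T ((q : X) - p)‖ + ‖B q ((q : X) - p)‖) + ‖B ((q : X) - p) p‖ := by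
            gcongr; exact norm_add_le _ _
        _ ≤ (ε * ‖(q : X) - p‖ + c * ‖(q : X)‖ * ‖(q : X) - p‖) + c * ‖(q : X) - p‖ * ‖(p : X)‖ := by
            gcongr; exact hT _; exact hB _ _; exact hB _ _
    have hrev : ‖(q : X) - p‖ = ‖(p : X) - q‖ := norm_sub_rev _ _
    rw [hrev] at h1
    have hd := norm_nonneg ((p : X) - q)
    have hcξ : c * ξ = ((1 - ε) - s) / 2 := by linarith
    have h2 : c * ‖(q : X)‖ * ‖(p : X) - q‖ ≤ (((1 - ε) - s) / 2) * ‖(p : X) - q‖ := by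
      rw [← hcξ]
      exact mul_le_mul_of_nonneg_right (mul_le_mul_of_nonneg_left hq hc.le) hd
    have h3 : c * ‖(p : X) - q‖ * ‖(p : X)‖ ≤ (((1 - ε) - s) / 2) * ‖(p : X) - q‖ := by
      rw [← hcξ]
      calc c * ‖(p : X) - q‖ * ‖(p : X)‖ = c * ‖(p : X)‖ * ‖(p : X) - q‖ := by ring
        _ ≤ c * ξ * ‖(p : X) - q‖ :=
            mul_le_mul_of_nonneg_right (mul_le_mul_of_nonneg_left hp hc.le) hd
    linarith
  have hK1 : K < 1 := by
    rw [← NNReal.coe_lt_coe, hKcoe, NNReal.coe_one]; linarith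
  have hcontr : ContractingWith K f := ⟨hK1, hlip⟩
  set xb : S := hcontr.fixedPoint f with hxbdef
  have hfix : f xb = xb := hcontr.fixedPoint_isFixedPt
  have hfixX : y - T xb - B xb xb = (xb : X) := congrArg Subtype.val hfix
  have heq : (xb : X) + T xb + B xb xb = y := by
    have h3 : (xb : X) + T xb + B xb xb - y
        = -((y - T xb - B xb xb) - (xb : X)) := by abel
    have h4 : (xb : X) + T xb + B xb xb - y = 0 := by
      rw [h3, hfixX]; abel
    exact sub_eq_zero.mp h4
  refine ⟨xb, hmem xb xb.2, heq, ?_⟩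
  intro x' hx'norm hx'eq
  have hsum : x' + T x' + B x' x' = (xb : X) + T xb + B xb xb := by
    rw [hx'eq, heq]
  have hdiff0 : x' - (xb : X) = (T xb - T x') + (B xb xb - B x' x') := by
    have h2 : x' + T x' + B x' x' - ((xb : X) + T xb + B xb xb) = 0 := sub_eq_zero.mpr hsum
    have h3 : x' - (xb : X) - ((T xb - T x') + (B xb xb - B x' x'))
        = x' + T x' + B x' x' - ((xb : X) + T xb + B xb xb) := by abel
    have h4 : x' - (xb : X) - ((T xb - T x') + (B xb xb - B x' x')) = 0 := by rw [h3, h2]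
    exact sub_eq_zero.mp h4
  have hdiff : x' - (xb : X) = T ((xb : X) - x') + B xb ((xb : X) - x') + B ((xb : X) - x') x' := by
    simp only [map_sub, LinearMap.sub_apply]
    rw [hdiff0]; abel
  have hbound : ‖x' - (xb : X)‖ ≤ ε * ‖(xb : X) - x'‖ + c * ‖(xb : X)‖ * ‖(xb : X) - x'‖
      + c * ‖(xb : X) - x'‖ * ‖x'‖ := by
    rw [hdiff]
    calc ‖T ((xb : X) - x') + B xb ((xb : X) - x') + B ((xb : X) - x') x'‖
        ≤ ‖T ((xb : X) - x') + B xb ((xb : X) - x')‖ + ‖B ((xb : X) - x') x'‖ := norm_add_le _ _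
      _ ≤ (‖T ((xb : X) - x')‖ + ‖B xb ((xb : X) - x')‖) + ‖B ((xb : X) - x') x'‖ := by
          gcongr; exact norm_add_le _ _
      _ ≤ (ε * ‖(xb : X) - x'‖ + c * ‖(xb : X)‖ * ‖(xb : X) - x'‖)
          + c * ‖(xb : X) - x'‖ * ‖x'‖ := by
          gcongr; exact hT _; exact hB _ _; exact hB _ _
  have hrev : ‖(xb : X) - x'‖ = ‖x' - (xb : X)‖ := norm_sub_rev _ _
  rw [hrev] at hbound
  have hxb : ‖(xb : X)‖ ≤ ξ := hmem xb xb.2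
  have hx'2 : 2 * c * ‖x'‖ < (1 - ε) + s := by
    rw [lt_div_iff₀ (by positivity)] at hx'norm
    linarith
  have hd0 : (0 : ℝ) ≤ ‖x' - (xb : X)‖ := norm_nonneg _
  set d : ℝ := ‖x' - (xb : X)‖ with hddef
  have hstep : d ≤ (ε + c * ξ + c * ‖x'‖) * d := by
    have h1 : c * ‖(xb : X)‖ * d ≤ c * ξ * d :=
      mul_le_mul_of_nonneg_right (mul_le_mul_of_nonneg_left hxb hc.le) hd0
    linarith [hbound]
  have hk : ε + c * ξ + c * ‖x'‖ < 1 := by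
    have hcx' : c * ‖x'‖ < ((1 - ε) + s) / 2 := by linarith
    have hcξ : c * ξ = ((1 - ε) - s) / 2 := by linarith
    linarith
  have hzero : d = 0 := by
    rcases hd0.eq_or_lt with h | h
    · exact h.symm
    · have := mul_lt_mul_of_pos_right hk h
      rw [one_mul] at this
      linarith
  exact sub_eq_zero.mp (norm_eq_zero.mp hzero)
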